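/- Let (u, d) = 𝒮(h) be the unique strong solution of the Ericksen-Leslie system and let (ω, φ) solve the linearized system around (u, d) with divergence-free ω, boundary data (ω, φ) = (0, ξ) on Γ_T, and zero initial data. If additionally ⟨ξ, h⟩ = 0 on Γ_T (ξ is a tangent vector field along h) and ⟨φ, d⟩ = 0 on the parabolic boundary, then ⟨φ, d⟩ ≡ 0 in Q_T; that is, the solution of the linearized system stays tangent to d. -/

import Mathlib

noncomputable section

open Set
open scoped RealInnerProductSpace

abbrev E2 : Type := EuclideanSpace ℝ (Fin 2)
abbrev E3 : Type := EuclideanSpace ℝ (Fin 3)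

/-- Spatial partial derivative in the `i`-th coordinate direction. -/
def pd {F : Type*} [NormedAddCommGroup F] [NormedSpace ℝ F]
    (f : E2 → F) (x : E2) (i : Fin 2) : F :=
  fderiv ℝ f x (EuclideanSpace.single i 1)

/-- The Laplacian `Δf = ∑ᵢ ∂ᵢᵢ f`. -/
def lap {F : Type*} [NormedAddCommGroup F] [NormedSpace ℝ F]
    (f : E2 → F) (x : E2) : F :=
  ∑ i, pd (fun y => pd f y i) x i

/-- The squared gradient `|∇f|² = ∑ᵢ |∂ᵢ f|²`. -/
def gradSq {F : Type*} [NormedAddCommGroup F] [NormedSpace ℝ F]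
    (f : E2 → F) (x : E2) : ℝ :=
  ∑ i, ‖pd f x i‖ ^ 2

/-- The divergence `∇·u = ∑ᵢ ∂ᵢ uⁱ`. -/
def divg (u : E2 → E2) (x : E2) : ℝ :=
  ∑ i, pd u x i i

open Filter
open scoped Topology

section Helpers

lemma deriv_nonneg_of_left_max {f : ℝ → ℝ} {a t : ℝ} (hat : a < t)
    (hf : DifferentiableAt ℝ f t) (hmax : ∀ s ∈ Set.Icc a t, f s ≤ f t) :
    0 ≤ deriv f t := by
  have h := hasDerivAt_iff_tendsto_slope.1 hf.hasDerivAt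
  have h' : Tendsto (slope f t) (𝓝[<] t) (𝓝 (deriv f t)) :=
    h.mono_left (nhdsWithin_mono t fun s hs => ne_of_lt hs)
  refine ge_of_tendsto h' ?_
  filter_upwards [Ioo_mem_nhdsLT_of_mem (⟨hat, le_refl t⟩ : t ∈ Set.Ioc a t)] with s hs
  have h1 := hmax s ⟨hs.1.le, hs.2.le⟩
  rw [slope_def_field]
  have h2 : s - t < 0 := by linarith [hs.2]
  exact div_nonneg_of_nonpos (by linarith) h2.le

lemma deriv_deriv_nonpos_of_isLocalMax {g : ℝ → ℝ} {t : ℝ}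
    (hg : ∀ᶠ s in 𝓝 t, DifferentiableAt ℝ g s)
    (hg2 : DifferentiableAt ℝ (deriv g) t)
    (hmax : IsLocalMax g t) : deriv (deriv g) t ≤ 0 := by
  by_contra hcon
  push_neg at hcon
  have h1 : deriv g t = 0 := hmax.deriv_eq_zero
  have hL := hasDerivAt_iff_tendsto_slope.1 hg2.hasDerivAt
  have hpos : ∀ᶠ s in 𝓝[≠] t, 0 < slope (deriv g) t s :=
    hL.eventually (eventually_gt_nhds hcon)
  rw [eventually_nhdsWithin_iff] at hpos
  have hand := hpos.and (hg.and (hmax : ∀ᶠ s in 𝓝 t, g s ≤ g t))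
  obtain ⟨ε, hε, hball⟩ := Metric.eventually_nhds_iff.1 hand
  set t' := t + ε / 2 with ht'
  have hmem : ∀ s ∈ Set.Icc t t', dist s t < ε := by
    intro s hs
    rw [Real.dist_eq, abs_of_nonneg (by linarith [hs.1])]
    have := hs.2
    simp only [ht'] at this ⊢
    linarith
  have hmono : StrictMonoOn g (Set.Icc t t') := by
    apply strictMonoOn_of_deriv_pos (convex_Icc t t')
    · intro s hs
      exact ((hball (hmem s hs)).2.1).continuousAt.continuousWithinAt
    · intro s hs
      rw [interior_Icc] at hs
      have hst : t < s := hs.1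
      have hd := hball (hmem s ⟨hst.le, hs.2.le⟩)
      have hslope := hd.1 (ne_of_gt hst)
      rw [slope_def_field, h1, sub_zero] at hslope
      by_contra hle
      push_neg at hle
      exact absurd hslope (not_lt.2 (div_nonpos_iff.2 (Or.inr ⟨hle, by linarith⟩)))
  have h2 : g t < g t' := hmono ⟨le_refl t, by simp [ht']; linarith⟩
      ⟨by simp [ht']; linarith, le_refl t'⟩ (by simp [ht']; linarith)
  have h3 : g t' ≤ g t := (hball (hmem t' ⟨by simp [ht']; linarith, le_refl t'⟩)).2.2
  linarith

lemma pd_pd_nonpos_of_isLocalMax {f : E2 → ℝ} {x : E2} (i : Fin 2)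
    (hf : ContDiffAt ℝ 2 f x) (hmax : IsLocalMax f x) :
    pd (fun y => pd f y i) x i ≤ 0 := by
  set v : E2 := EuclideanSpace.single i (1:ℝ) with hv
  set ℓ : ℝ → E2 := fun s => x + s • v with hℓdef
  have hℓ : ∀ s, HasDerivAt ℓ v s := by
    intro s
    have h1 : HasDerivAt (fun s : ℝ => s • v) ((1:ℝ) • v) s :=
      (hasDerivAt_id s).smul_const v
    simpa [hℓdef] using h1.const_add x
  have hℓ0 : ℓ 0 = x := by simp [hℓdef]
  have hℓcont : Tendsto ℓ (𝓝 0) (𝓝 x) := by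
    have h := (hℓ 0).continuousAt
    unfold ContinuousAt at h
    rwa [hℓ0] at h
  have hev : ∀ᶠ y in 𝓝 x, ContDiffAt ℝ 2 f y := hf.eventually (by norm_num)
  have hg : ∀ᶠ s in 𝓝 0, ContDiffAt ℝ 2 f (ℓ s) := hℓcont.eventually hev
  set g : ℝ → ℝ := fun s => f (ℓ s) with hgdef
  have hgd : ∀ᶠ s in 𝓝 0, HasDerivAt g (fderiv ℝ f (ℓ s) v) s := by
    filter_upwards [hg] with s hs
    exact (hs.differentiableAt two_ne_zero).hasFDerivAt.comp_hasDerivAt s (hℓ s)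
  have hderiv_eq : deriv g =ᶠ[𝓝 0] fun s => pd f (ℓ s) i := by
    filter_upwards [hgd] with s hs
    rw [hs.deriv]; rfl
  have hf' : ContDiffAt ℝ 1 (fderiv ℝ f) x := hf.fderiv_right (by norm_num)
  have hpdiff : DifferentiableAt ℝ (fun y => pd f y i) x := by
    have h2 : DifferentiableAt ℝ (fun y => (ContinuousLinearMap.apply ℝ ℝ v) (fderiv ℝ f y)) x :=
      (ContinuousLinearMap.apply ℝ ℝ v).differentiableAt.comp x (hf'.differentiableAt one_ne_zero)
    exact h2
  have hcomp : HasDerivAt (fun s => pd f (ℓ s) i) (fderiv ℝ (fun y => pd f y i) x v) 0 := by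
    have h := (hℓ0 ▸ hpdiff.hasFDerivAt : HasFDerivAt (fun y => pd f y i)
      (fderiv ℝ (fun y => pd f y i) x) (ℓ 0)).comp_hasDerivAt 0 (hℓ 0)
    exact h
  have hg2 : DifferentiableAt ℝ (deriv g) 0 :=
    (Filter.EventuallyEq.differentiableAt_iff hderiv_eq).2 hcomp.differentiableAt
  have hmaxg : IsLocalMax g 0 := by
    have h3 : ∀ᶠ s in 𝓝 0, f (ℓ s) ≤ f x := hℓcont.eventually hmax
    simpa [IsLocalMax, IsMaxFilter, hgdef, hℓ0] using h3
  have hgdiff : ∀ᶠ s in 𝓝 0, DifferentiableAt ℝ g s := by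
    filter_upwards [hgd] with s hs; exact hs.differentiableAt
  have hkey := deriv_deriv_nonpos_of_isLocalMax hgdiff hg2 hmaxg
  have hrw : deriv (deriv g) 0 = pd (fun y => pd f y i) x i := by
    rw [hderiv_eq.deriv_eq, hcomp.deriv]; rfl
  rwa [hrw] at hkey

lemma lap_nonpos_of_isLocalMax {f : E2 → ℝ} {x : E2}
    (hf : ContDiffAt ℝ 2 f x) (hmax : IsLocalMax f x) : lap f x ≤ 0 :=
  Finset.sum_nonpos fun i _ => pd_pd_nonpos_of_isLocalMax i hf hmax

lemma lap_neg (f : E2 → ℝ) (x : E2) : lap (fun y => -f y) x = -lap f x := by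
  have h : ∀ i : Fin 2, (fun y => pd (fun z => -f z) y i) = fun y => -(pd f y i) := by
    intro i
    funext y
    show fderiv ℝ (fun z => -f z) y _ = _
    rw [fderiv_fun_neg]; rfl
  simp only [lap]
  rw [← Finset.sum_neg_distrib]
  refine Finset.sum_congr rfl fun i _ => ?_
  rw [h i]
  show fderiv ℝ (fun y => -(pd f y i)) x _ = _
  rw [fderiv_fun_neg]; rfl

lemma parabolic_max_principle
    (Ω : Set E2) (T : ℝ) (hΩo : IsOpen Ω) (hΩb : Bornology.IsBounded Ω) (hT : 0 < T)
    (ψ : E2 × ℝ → ℝ) (b : E2 × ℝ → E2) (c : E2 × ℝ → ℝ) (K : ℝ)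
    (hψ_cont : ContinuousOn ψ (closure Ω ×ˢ Icc 0 T))
    (hψ_x : ∀ t ∈ Ioo 0 T, ∀ x ∈ Ω, ContDiffAt ℝ 2 (fun y => ψ (y, t)) x)
    (hψ_t : ∀ t ∈ Ioo 0 T, ∀ x ∈ Ω, DifferentiableAt ℝ (fun s => ψ (x, s)) t)
    (hc : ∀ t ∈ Ioo 0 T, ∀ x ∈ Ω, c (x, t) ≤ K)
    (hpde : ∀ t ∈ Ioo 0 T, ∀ x ∈ Ω,
      deriv (fun s => ψ (x, s)) t + fderiv ℝ (fun y => ψ (y, t)) x (b (x, t))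
        - lap (fun y => ψ (y, t)) x = c (x, t) * ψ (x, t))
    (hbdry : ∀ x ∈ frontier Ω, ∀ t ∈ Icc (0:ℝ) T, ψ (x, t) = 0)
    (hinit : ∀ x ∈ closure Ω, ψ (x, 0) = 0) :
    ∀ x ∈ closure Ω, ∀ t ∈ Icc (0:ℝ) T, ψ (x, t) ≤ 0 := by
  set lam : ℝ := max K 0 + 1 with hlam
  have hKlam : K < lam := lt_of_le_of_lt (le_max_left K 0) (by simp [hlam])
  -- key claim on truncated cylinders
  have key : ∀ T' ∈ Ioo 0 T, ∀ x ∈ closure Ω, ∀ t ∈ Icc (0:ℝ) T', ψ (x, t) ≤ 0 := by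
    intro T' hT' x hx t ht
    set w : E2 × ℝ → ℝ := fun q => ψ q * Real.exp (-lam * q.2) with hw
    set Q' : Set (E2 × ℝ) := closure Ω ×ˢ Icc 0 T' with hQ'
    have hsub : Q' ⊆ closure Ω ×ˢ Icc 0 T := by
      apply Set.prod_mono_right
      exact Icc_subset_Icc le_rfl hT'.2.le
    have hQ'cpt : IsCompact Q' := hΩb.isCompact_closure.prod isCompact_Icc
    have hpQ' : (x, t) ∈ Q' := ⟨hx, ht⟩
    have hwcont : ContinuousOn w Q' :=
      (hψ_cont.mono hsub).mul ((Real.continuous_exp.comp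
        (continuous_const.mul continuous_snd)).continuousOn)
    obtain ⟨q1, hq1, hq1max⟩ := hQ'cpt.exists_isMaxOn ⟨(x, t), hpQ'⟩ hwcont
    by_cases hM : w q1 ≤ 0
    · have h1 : w (x, t) ≤ w q1 := hq1max hpQ'
      have h2 : (0:ℝ) < Real.exp (-lam * t) := Real.exp_pos _
      simp only [hw] at h1 hM
      by_contra hcon
      push_neg at hcon
      nlinarith [h1, h2, hM, hcon]
    push_neg at hM
    exfalso
    obtain ⟨x1, t1⟩ := q1
    obtain ⟨hx1c, ht1c⟩ : x1 ∈ closure Ω ∧ t1 ∈ Icc 0 T' := hq1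
    have hepos : (0:ℝ) < Real.exp (-lam * t1) := Real.exp_pos _
    have hψpos : 0 < ψ (x1, t1) := by
      by_contra h; push_neg at h
      have : w (x1, t1) ≤ 0 := mul_nonpos_of_nonpos_of_nonneg h hepos.le
      exact absurd this (not_le.2 hM)
    have hx1Ω : x1 ∈ Ω := by
      by_contra h
      have hfr : x1 ∈ frontier Ω := ⟨hx1c, by rwa [hΩo.interior_eq]⟩
      have := hbdry x1 hfr t1 ⟨ht1c.1, le_trans ht1c.2 hT'.2.le⟩
      rw [this] at hψpos; exact lt_irrefl 0 hψpos
    have ht1pos : 0 < t1 := by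
      rcases eq_or_lt_of_le ht1c.1 with h | h
      · exfalso; rw [← h] at hψpos
        rw [hinit x1 hx1c] at hψpos; exact lt_irrefl 0 hψpos
      · exact h
    have ht1 : t1 ∈ Ioo 0 T := ⟨ht1pos, lt_of_le_of_lt ht1c.2 hT'.2⟩
    -- spatial local max
    have hlm : IsLocalMax (fun y => ψ (y, t1)) x1 := by
      have hΩn : Ω ∈ 𝓝 x1 := hΩo.mem_nhds hx1Ω
      filter_upwards [hΩn] with y hy
      have h1 : w (y, t1) ≤ w (x1, t1) := hq1max ⟨subset_closure hy, ht1c⟩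
      exact le_of_mul_le_mul_right h1 hepos
    have hfder : fderiv ℝ (fun y => ψ (y, t1)) x1 = 0 := hlm.fderiv_eq_zero
    have hlap : lap (fun y => ψ (y, t1)) x1 ≤ 0 :=
      lap_nonpos_of_isLocalMax (hψ_x t1 ht1 x1 hx1Ω) hlm
    -- time derivative
    have hψt := hψ_t t1 ht1 x1 hx1Ω
    have hexp : HasDerivAt (fun s : ℝ => Real.exp (-lam * s))
        (Real.exp (-lam * t1) * -lam) t1 := by
      have h1 : HasDerivAt (fun s : ℝ => -lam * s) (-lam) t1 := by
        simpa using (hasDerivAt_id t1).const_mul (-lam)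
      exact h1.exp
    have hfd : HasDerivAt (fun s => ψ (x1, s) * Real.exp (-lam * s))
        (deriv (fun s => ψ (x1, s)) t1 * Real.exp (-lam * t1)
          + ψ (x1, t1) * (Real.exp (-lam * t1) * -lam)) t1 :=
      hψt.hasDerivAt.mul hexp
    have hfmax : ∀ s ∈ Icc 0 t1, ψ (x1, s) * Real.exp (-lam * s)
        ≤ ψ (x1, t1) * Real.exp (-lam * t1) := by
      intro s hs
      exact hq1max ⟨hx1c, ⟨hs.1, le_trans hs.2 ht1c.2⟩⟩
    have h0le : 0 ≤ deriv (fun s => ψ (x1, s) * Real.exp (-lam * s)) t1 :=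
      deriv_nonneg_of_left_max ht1pos hfd.differentiableAt hfmax
    rw [hfd.deriv] at h0le
    have hderiv_ge : lam * ψ (x1, t1) ≤ deriv (fun s => ψ (x1, s)) t1 := by
      nlinarith [h0le, hepos]
    -- PDE
    have hp := hpde t1 ht1 x1 hx1Ω
    rw [hfder] at hp
    simp only [ContinuousLinearMap.zero_apply, add_zero] at hp
    have hcK := hc t1 ht1 x1 hx1Ω
    nlinarith [hp, hlap, hderiv_ge, hψpos, hcK, hKlam]
  -- extend to the full cylinder
  have key2 : ∀ x ∈ closure Ω, ∀ t ∈ Ico (0:ℝ) T, ψ (x, t) ≤ 0 := by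
    intro x hx t ht
    have hT'mem : (t + T) / 2 ∈ Ioo 0 T := ⟨by linarith [ht.1], by linarith [ht.2]⟩
    exact key _ hT'mem x hx t ⟨ht.1, by linarith [ht.2]⟩
  intro x hx t ht
  rcases eq_or_lt_of_le ht.2 with h | h
  · -- t = T : limit argument
    subst h
    have hcx : ContinuousWithinAt (fun s => ψ (x, s)) (Icc 0 t) t := by
      have h1 : ContinuousOn (fun s => ψ (x, s)) (Icc 0 t) := by
        apply hψ_cont.comp (Continuous.continuousOn (by fun_prop))
        intro s hs
        exact ⟨hx, hs⟩
      exact h1 t ht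
    have hne : (𝓝[Ico (0:ℝ) t] t).NeBot := by
      rw [← mem_closure_iff_nhdsWithin_neBot, closure_Ico (ne_of_lt hT)]
      exact ⟨le_of_lt hT, le_rfl⟩
    have htend : Tendsto (fun s => ψ (x, s)) (𝓝[Ico (0:ℝ) t] t) (𝓝 (ψ (x, t))) :=
      (hcx.mono Ico_subset_Icc_self).tendsto
    refine le_of_tendsto htend ?_
    filter_upwards [self_mem_nhdsWithin] with s hs
    exact key2 x hx s hs
  · exact key2 x hx t ⟨ht.1, h⟩

/-- The scalar PDE satisfied by `ψ = ⟪φ, d⟫`, at one interior point. -/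
lemma inner_pde
    (Ω : Set E2) (T : ℝ) (hΩo : IsOpen Ω) (hT : 0 < T)
    (u ω : E2 × ℝ → E2) (d φ : E2 × ℝ → E3)
    (hd_x : ∀ t ∈ Ioo 0 T, ∀ x ∈ Ω, ContDiffAt ℝ 2 (fun y => d (y, t)) x)
    (hφ_x : ∀ t ∈ Ioo 0 T, ∀ x ∈ Ω, ContDiffAt ℝ 2 (fun y => φ (y, t)) x)
    (hd_unit : ∀ x ∈ closure Ω, ∀ t ∈ Icc (0 : ℝ) T, ‖d (x, t)‖ = 1)
    (hd_pde : ∀ t ∈ Ioo 0 T, ∀ x ∈ Ω,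
      deriv (fun s => d (x, s)) t + fderiv ℝ (fun y => d (y, t)) x (u (x, t))
          - lap (fun y => d (y, t)) x
        = gradSq (fun y => d (y, t)) x • d (x, t))
    (hφ_pde : ∀ t ∈ Ioo 0 T, ∀ x ∈ Ω,
      deriv (fun s => φ (x, s)) t - lap (fun y => φ (y, t)) x
          + fderiv ℝ (fun y => φ (y, t)) x (u (x, t))
          + fderiv ℝ (fun y => d (y, t)) x (ω (x, t))
        = gradSq (fun y => d (y, t)) x • φ (x, t)
          + (2 * ∑ i, ⟪pd (fun y => d (y, t)) x i, pd (fun y => φ (y, t)) x i⟫)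
              • d (x, t))
    {t : ℝ} (ht : t ∈ Ioo 0 T) {x : E2} (hx : x ∈ Ω)
    (hφt : DifferentiableAt ℝ (fun s => φ (x, s)) t)
    (hdt : DifferentiableAt ℝ (fun s => d (x, s)) t) :
    deriv (fun s => ⟪φ (x, s), d (x, s)⟫) t
      + fderiv ℝ (fun y => ⟪φ (y, t), d (y, t)⟫) x (u (x, t))
      - lap (fun y => ⟪φ (y, t), d (y, t)⟫) x
    = (2 * gradSq (fun y => d (y, t)) x) * ⟪φ (x, t), d (x, t)⟫ := by
  have htIcc : t ∈ Icc (0:ℝ) T := ⟨ht.1.le, ht.2.le⟩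
  have hΩn : Ω ∈ 𝓝 x := hΩo.mem_nhds hx
  have hD : DifferentiableAt ℝ (fun z => d (z, t)) x :=
    (hd_x t ht x hx).differentiableAt two_ne_zero
  have hΦ : DifferentiableAt ℝ (fun z => φ (z, t)) x :=
    (hφ_x t ht x hx).differentiableAt two_ne_zero
  -- orthogonality of spatial derivatives of d to d
  have horth : ∀ v : E2, ⟪fderiv ℝ (fun z => d (z, t)) x v, d (x, t)⟫ = 0 := by
    intro v
    have hconst : (fun y => (⟪d (y, t), d (y, t)⟫ : ℝ)) =ᶠ[𝓝 x] fun _ => (1:ℝ) := by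
      filter_upwards [hΩn] with y hy
      rw [real_inner_self_eq_norm_sq, hd_unit y (subset_closure hy) t htIcc]; norm_num
    have h0 : fderiv ℝ (fun y => (⟪d (y, t), d (y, t)⟫ : ℝ)) x = 0 := by
      rw [hconst.fderiv_eq]; exact fderiv_const_apply 1
    have h1 := fderiv_inner_apply (𝕜 := ℝ) hD hD v
    rw [h0] at h1
    simp only [ContinuousLinearMap.zero_apply] at h1
    have hcm := real_inner_comm (d (x, t)) (fderiv ℝ (fun z => d (z, t)) x v)
    linarith [h1.symm, hcm]
  have hunit : (⟪d (x, t), d (x, t)⟫ : ℝ) = 1 := by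
    rw [real_inner_self_eq_norm_sq, hd_unit x (subset_closure hx) t htIcc]; norm_num
  -- time derivative
  have hBtime : deriv (fun s => ⟪φ (x, s), d (x, s)⟫) t
      = ⟪φ (x, t), deriv (fun s => d (x, s)) t⟫
        + ⟪deriv (fun s => φ (x, s)) t, d (x, t)⟫ :=
    deriv_inner_apply (𝕜 := ℝ) hφt hdt
  -- first spatial derivative
  have hCx : fderiv ℝ (fun y => ⟪φ (y, t), d (y, t)⟫) x (u (x, t))
      = ⟪φ (x, t), fderiv ℝ (fun z => d (z, t)) x (u (x, t))⟫
        + ⟪fderiv ℝ (fun z => φ (z, t)) x (u (x, t)), d (x, t)⟫ :=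
    fderiv_inner_apply (𝕜 := ℝ) hΦ hD (u (x, t))
  -- second derivatives
  have hpdΦ : ∀ i, DifferentiableAt ℝ (fun y => pd (fun z => φ (z, t)) y i) x := by
    intro i
    have h1 : ContDiffAt ℝ 1 (fderiv ℝ (fun z => φ (z, t))) x :=
      (hφ_x t ht x hx).fderiv_right (by norm_num)
    exact ((ContinuousLinearMap.apply ℝ E3 (EuclideanSpace.single i 1)).differentiableAt).comp x
      (h1.differentiableAt one_ne_zero)
  have hpdD : ∀ i, DifferentiableAt ℝ (fun y => pd (fun z => d (z, t)) y i) x := by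
    intro i
    have h1 : ContDiffAt ℝ 1 (fderiv ℝ (fun z => d (z, t))) x :=
      (hd_x t ht x hx).fderiv_right (by norm_num)
    exact ((ContinuousLinearMap.apply ℝ E3 (EuclideanSpace.single i 1)).differentiableAt).comp x
      (h1.differentiableAt one_ne_zero)
  have hlapψ : lap (fun y => ⟪φ (y, t), d (y, t)⟫) x
      = ⟪φ (x, t), lap (fun z => d (z, t)) x⟫ + ⟪lap (fun z => φ (z, t)) x, d (x, t)⟫
        + 2 * ∑ i, ⟪pd (fun z => φ (z, t)) x i, pd (fun z => d (z, t)) x i⟫ := by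
    have hterm : ∀ i : Fin 2, pd (fun y => pd (fun z => ⟪φ (z, t), d (z, t)⟫) y i) x i
        = (⟪φ (x, t), pd (fun y => pd (fun z => d (z, t)) y i) x i⟫
            + ⟪pd (fun z => φ (z, t)) x i, pd (fun z => d (z, t)) x i⟫)
          + (⟪pd (fun y => pd (fun z => φ (z, t)) y i) x i, d (x, t)⟫
            + ⟪pd (fun z => φ (z, t)) x i, pd (fun z => d (z, t)) x i⟫) := by
      intro i
      have hev : (fun y => pd (fun z => ⟪φ (z, t), d (z, t)⟫) y i)
          =ᶠ[𝓝 x] fun y => ⟪φ (y, t), pd (fun z => d (z, t)) y i⟫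
            + ⟪pd (fun z => φ (z, t)) y i, d (y, t)⟫ := by
        filter_upwards [hΩn] with y hy
        have hDy : DifferentiableAt ℝ (fun z => d (z, t)) y :=
          (hd_x t ht y hy).differentiableAt two_ne_zero
        have hΦy : DifferentiableAt ℝ (fun z => φ (z, t)) y :=
          (hφ_x t ht y hy).differentiableAt two_ne_zero
        exact fderiv_inner_apply (𝕜 := ℝ) hΦy hDy (EuclideanSpace.single i 1)
      have hdiffA : DifferentiableAt ℝ
          (fun y => (⟪φ (y, t), pd (fun z => d (z, t)) y i⟫ : ℝ)) x :=
        hΦ.inner ℝ (hpdD i)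
      have hdiffB : DifferentiableAt ℝ
          (fun y => (⟪pd (fun z => φ (z, t)) y i, d (y, t)⟫ : ℝ)) x :=
        (hpdΦ i).inner ℝ hD
      have h2 : pd (fun y => pd (fun z => ⟪φ (z, t), d (z, t)⟫) y i) x i
          = fderiv ℝ (fun y => (⟪φ (y, t), pd (fun z => d (z, t)) y i⟫ : ℝ)
              + (⟪pd (fun z => φ (z, t)) y i, d (y, t)⟫ : ℝ)) x (EuclideanSpace.single i 1) := by
        show fderiv ℝ _ x (EuclideanSpace.single i 1) = _
        rw [hev.fderiv_eq]
      rw [h2, fderiv_fun_add hdiffA hdiffB]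
      simp only [ContinuousLinearMap.add_apply]
      rw [fderiv_inner_apply (𝕜 := ℝ) hΦ (hpdD i) (EuclideanSpace.single i 1),
        fderiv_inner_apply (𝕜 := ℝ) (hpdΦ i) hD (EuclideanSpace.single i 1)]
      have e1 : ⟪φ (x, t), fderiv ℝ (fun y => pd (fun z => d (z, t)) y i) x
          (EuclideanSpace.single i 1)⟫
          = ⟪φ (x, t), pd (fun y => pd (fun z => d (z, t)) y i) x i⟫ := rfl
      have e2 : ⟪fderiv ℝ (fun z => φ (z, t)) x (EuclideanSpace.single i 1),
          pd (fun z => d (z, t)) x i⟫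
          = ⟪pd (fun z => φ (z, t)) x i, pd (fun z => d (z, t)) x i⟫ := rfl
      have e3 : ⟪pd (fun z => φ (z, t)) x i, fderiv ℝ (fun z => d (z, t)) x
          (EuclideanSpace.single i 1)⟫
          = ⟪pd (fun z => φ (z, t)) x i, pd (fun z => d (z, t)) x i⟫ := rfl
      have e4 : ⟪fderiv ℝ (fun y => pd (fun z => φ (z, t)) y i) x
          (EuclideanSpace.single i 1), d (x, t)⟫
          = ⟪pd (fun y => pd (fun z => φ (z, t)) y i) x i, d (x, t)⟫ := rfl
      rw [e1, e2, e3, e4]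
      ring
    show (∑ i, pd (fun y => pd (fun z => ⟪φ (z, t), d (z, t)⟫) y i) x i) = _
    rw [Finset.sum_congr rfl fun i _ => hterm i]
    rw [Finset.sum_add_distrib, Finset.sum_add_distrib, Finset.sum_add_distrib]
    rw [← inner_sum, ← sum_inner]
    show ⟪φ (x, t), lap (fun z => d (z, t)) x⟫
        + (∑ i, ⟪pd (fun z => φ (z, t)) x i, pd (fun z => d (z, t)) x i⟫)
        + (⟪lap (fun z => φ (z, t)) x, d (x, t)⟫
        + (∑ i, ⟪pd (fun z => φ (z, t)) x i, pd (fun z => d (z, t)) x i⟫)) = _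
    ring
  -- pair the PDEs with inner products
  have hPd : ⟪deriv (fun s => φ (x, s)) t, d (x, t)⟫
      - ⟪lap (fun z => φ (z, t)) x, d (x, t)⟫
      + ⟪fderiv ℝ (fun z => φ (z, t)) x (u (x, t)), d (x, t)⟫
      + ⟪fderiv ℝ (fun z => d (z, t)) x (ω (x, t)), d (x, t)⟫
      = gradSq (fun z => d (z, t)) x * ⟪φ (x, t), d (x, t)⟫
        + (2 * ∑ i, ⟪pd (fun z => d (z, t)) x i, pd (fun z => φ (z, t)) x i⟫)
          * ⟪d (x, t), d (x, t)⟫ := by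
    have h := congrArg (fun w : E3 => (⟪w, d (x, t)⟫ : ℝ)) (hφ_pde t ht x hx)
    simpa only [inner_add_left, inner_sub_left, real_inner_smul_left] using h
  have hQd : ⟪φ (x, t), deriv (fun s => d (x, s)) t⟫
      + ⟪φ (x, t), fderiv ℝ (fun z => d (z, t)) x (u (x, t))⟫
      - ⟪φ (x, t), lap (fun z => d (z, t)) x⟫
      = gradSq (fun z => d (z, t)) x * ⟪φ (x, t), d (x, t)⟫ := by
    have h := congrArg (fun w : E3 => (⟪φ (x, t), w⟫ : ℝ)) (hd_pde t ht x hx)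
    simpa only [inner_add_right, inner_sub_right, real_inner_smul_right] using h
  have hcomm : ∑ i, ⟪pd (fun z => d (z, t)) x i, pd (fun z => φ (z, t)) x i⟫
      = ∑ i, (⟪pd (fun z => φ (z, t)) x i, pd (fun z => d (z, t)) x i⟫ : ℝ) :=
    Finset.sum_congr rfl fun i _ => real_inner_comm _ _
  rw [hBtime, hCx, hlapψ]
  rw [horth (ω (x, t)), hunit, hcomm] at hPd
  linarith [hPd, hQd]

end Helpers

/-- **The linearized flow stays tangent to `d`.**  Let `(u,d)` be the strong solution
of the Ericksen–Leslie system (`|d| = 1`, `d` solving the director equation) and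
`(ω,φ)` a solution of the linearized system around `(u,d)` with divergence-free `ω`,
boundary data `(ω,φ) = (0,ξ)` on `Γ_T` and zero initial data.  If `⟨ξ,h⟩ = 0` on
`Γ_T` (so that `⟨φ,d⟩ = 0` on the parabolic boundary), then `⟨φ,d⟩ ≡ 0` in `Q_T`. -/
theorem linearized_solution_stays_tangent
    (Ω : Set E2) (T : ℝ) (hΩo : IsOpen Ω) (hΩb : Bornology.IsBounded Ω) (hT : 0 < T)
    (u ω : E2 × ℝ → E2) (d φ : E2 × ℝ → E3)
    -- regularity
    (hd_cont : ContinuousOn d (closure Ω ×ˢ Icc 0 T))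
    (hφ_cont : ContinuousOn φ (closure Ω ×ˢ Icc 0 T))
    (hd_x : ∀ t ∈ Ioo 0 T, ∀ x ∈ Ω, ContDiffAt ℝ 2 (fun y => d (y, t)) x)
    (hφ_x : ∀ t ∈ Ioo 0 T, ∀ x ∈ Ω, ContDiffAt ℝ 2 (fun y => φ (y, t)) x)
    (hd_t : ∀ t ∈ Ioo 0 T, ∀ x ∈ Ω, DifferentiableAt ℝ (fun s => d (x, s)) t)
    (hφ_t : ∀ t ∈ Ioo 0 T, ∀ x ∈ Ω, DifferentiableAt ℝ (fun s => φ (x, s)) t)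
    (hgrad_bdd : ∃ K : ℝ, ∀ t ∈ Ioo 0 T, ∀ x ∈ Ω, gradSq (fun y => d (y, t)) x ≤ K)
    -- |d| = 1
    (hd_unit : ∀ x ∈ closure Ω, ∀ t ∈ Icc (0 : ℝ) T, ‖d (x, t)‖ = 1)
    -- divergence-free fields
    (hdiv_u : ∀ t ∈ Ioo 0 T, ∀ x ∈ Ω, divg (fun y => u (y, t)) x = 0)
    (hdiv_ω : ∀ t ∈ Ioo 0 T, ∀ x ∈ Ω, divg (fun y => ω (y, t)) x = 0)
    -- the director equation: ∂ₜ d + u·∇d − Δd = |∇d|² d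
    (hd_pde : ∀ t ∈ Ioo 0 T, ∀ x ∈ Ω,
      deriv (fun s => d (x, s)) t + fderiv ℝ (fun y => d (y, t)) x (u (x, t))
          - lap (fun y => d (y, t)) x
        = gradSq (fun y => d (y, t)) x • d (x, t))
    -- the linearized equation: ∂ₜ φ − Δφ + u·∇φ + ω·∇d = |∇d|² φ + 2⟨∇d,∇φ⟩ d
    (hφ_pde : ∀ t ∈ Ioo 0 T, ∀ x ∈ Ω,
      deriv (fun s => φ (x, s)) t - lap (fun y => φ (y, t)) x
          + fderiv ℝ (fun y => φ (y, t)) x (u (x, t))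
          + fderiv ℝ (fun y => d (y, t)) x (ω (x, t))
        = gradSq (fun y => d (y, t)) x • φ (x, t)
          + (2 * ∑ i, ⟪pd (fun y => d (y, t)) x i, pd (fun y => φ (y, t)) x i⟫)
              • d (x, t))
    -- ⟨φ, d⟩ vanishes on the parabolic boundary
    (hbdry : ∀ x ∈ frontier Ω, ∀ t ∈ Icc (0 : ℝ) T, ⟪φ (x, t), d (x, t)⟫ = 0)
    (hinit : ∀ x ∈ closure Ω, ⟪φ (x, 0), d (x, 0)⟫ = 0) :
    ∀ x ∈ closure Ω, ∀ t ∈ Icc (0 : ℝ) T, ⟪φ (x, t), d (x, t)⟫ = 0 := by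
  obtain ⟨K, hK⟩ := hgrad_bdd
  have hψ_pde : ∀ t ∈ Ioo 0 T, ∀ x ∈ Ω,
      deriv (fun s => (⟪φ (x, s), d (x, s)⟫ : ℝ)) t
        + fderiv ℝ (fun y => (⟪φ (y, t), d (y, t)⟫ : ℝ)) x (u (x, t))
        - lap (fun y => (⟪φ (y, t), d (y, t)⟫ : ℝ)) x
      = (2 * gradSq (fun y => d (y, t)) x) * ⟪φ (x, t), d (x, t)⟫ :=
    fun t ht x hx => inner_pde Ω T hΩo hT u ω d φ hd_x hφ_x hd_unit hd_pde hφ_pde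
      ht hx (hφ_t t ht x hx) (hd_t t ht x hx)
  have hψ_cont : ContinuousOn (fun p : E2 × ℝ => (⟪φ p, d p⟫ : ℝ))
      (closure Ω ×ˢ Icc 0 T) := hφ_cont.inner hd_cont
  have hψ_x : ∀ t ∈ Ioo 0 T, ∀ x ∈ Ω,
      ContDiffAt ℝ 2 (fun y => (⟪φ (y, t), d (y, t)⟫ : ℝ)) x :=
    fun t ht x hx => (hφ_x t ht x hx).inner ℝ (hd_x t ht x hx)
  have hψ_t : ∀ t ∈ Ioo 0 T, ∀ x ∈ Ω,
      DifferentiableAt ℝ (fun s => (⟪φ (x, s), d (x, s)⟫ : ℝ)) t :=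
    fun t ht x hx => (hφ_t t ht x hx).inner ℝ (hd_t t ht x hx)
  have hc : ∀ t ∈ Ioo 0 T, ∀ x ∈ Ω,
      (2 : ℝ) * gradSq (fun y => d (y, t)) x ≤ 2 * K := by
    intro t ht x hx
    have := hK t ht x hx
    linarith
  have hle := parabolic_max_principle Ω T hΩo hΩb hT
      (fun p => (⟪φ p, d p⟫ : ℝ)) u
      (fun p => 2 * gradSq (fun y => d (y, p.2)) p.1) (2 * K)
      hψ_cont hψ_x hψ_t hc hψ_pde hbdry hinit
  have hψ_pde_neg : ∀ t ∈ Ioo 0 T, ∀ x ∈ Ω,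
      deriv (fun s => -(⟪φ (x, s), d (x, s)⟫ : ℝ)) t
        + fderiv ℝ (fun y => -(⟪φ (y, t), d (y, t)⟫ : ℝ)) x (u (x, t))
        - lap (fun y => -(⟪φ (y, t), d (y, t)⟫ : ℝ)) x
      = (2 * gradSq (fun y => d (y, t)) x) * -⟪φ (x, t), d (x, t)⟫ := by
    intro t ht x hx
    rw [deriv.fun_neg, fderiv_fun_neg, lap_neg]
    simp only [ContinuousLinearMap.neg_apply]
    linear_combination -(hψ_pde t ht x hx)
  have hge := parabolic_max_principle Ω T hΩo hΩb hT
      (fun p => -(⟪φ p, d p⟫ : ℝ)) u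
      (fun p => 2 * gradSq (fun y => d (y, p.2)) p.1) (2 * K)
      hψ_cont.neg (fun t ht x hx => (hψ_x t ht x hx).neg)
      (fun t ht x hx => (hψ_t t ht x hx).neg) hc hψ_pde_neg
      (fun x hx t ht => neg_eq_zero.mpr (hbdry x hx t ht))
      (fun x hx => neg_eq_zero.mpr (hinit x hx))
  intro x hx t ht
  have h1 := hle x hx t ht
  have h2 := hge x hx t ht
  simp only [neg_nonpos] at h2
  exact le_antisymm h1 h2
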